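/- For any two strings S1 and S2 of equal length, the Cartesian trees CT(S1) and CT(S2) are equal if and only if PD(S1) = PD(S2). -/

import Mathlib

open List

inductive Shape where
  | nil : Shape
  | node : Shape → Shape → Shape
deriving DecidableEq

inductive BTree (α : Type*) where
  | nil : BTree α
  | node : BTree α → α → BTree α → BTree α

def BTree.shape {α : Type*} : BTree α → Shape
  | .nil => .nil
  | .node l _ r => .node l.shape r.shape

def BTree.rootVal {α : Type*} : BTree α → Option α
  | .nil => none
  | .node _ v _ => some v

section
variable {α : Type*} [LinearOrder α] [Inhabited α]

/-- Parent-distance value at 1-based position `i` of `S`. -/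
def pdVal (S : List α) (i : ℕ) : ℕ :=
  let J := (Finset.Ico 1 i).filter (fun j => S.getD (j-1) default ≤ S.getD (i-1) default)
  if h : J.Nonempty then i - J.max' h else 0

/-- Parent-distance encoding of `S` (1-based positions). -/
def PD (S : List α) : List ℕ := (List.range S.length).map (fun k => pdVal S (k+1))

/-- 0-based index of the leftmost minimum of `S`. -/
def leftmostMinIdx (S : List α) : ℕ :=
  ((List.range S.length).argmin (fun j => S.getD j default)).getD 0

def CTaux : ℕ → List α → BTree α
  | 0, _ => .nil
  | (n+1), S =>
    if S.isEmpty then .nil else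
      let i := leftmostMinIdx S
      .node (CTaux n (S.take i)) (S.getD i default) (CTaux n (S.drop (i+1)))

/-- The (labeled) Cartesian tree of `S`. -/
def CT (S : List α) : BTree α := CTaux S.length S

/-- Front pointers of a sequence `u` of naturals (1-based positions `k ≥ 2` with `k - u[k] = 1`). -/
def frontPointers (u : List ℕ) : Finset ℕ :=
  (Finset.Icc 2 u.length).filter (fun k => k - u.getD (k-1) 0 = 1)

/-- `FP(S)[i]`: number of front pointers of `PD(S[i..])` (1-based `i`). -/
def FPval (S : List α) (i : ℕ) : ℕ := (frontPointers (PD (S.drop (i-1)))).card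

/-- The FP encoding of `S`. -/
def FP (S : List α) : List ℕ := (List.range S.length).map (fun k => FPval S (k+1))

end

/-! ### Auxiliary development -/

namespace CTPD

/-- Number of nodes of a shape. -/
def ssize : Shape → ℕ
  | .nil => 0
  | .node l r => ssize l + ssize r + 1

/-- The PD sequence determined by a shape.  The boolean flag records whether
some element (smaller-or-equal to everything in the subtree) precedes the subtree. -/
def pdShape : Shape → Bool → List ℕ
  | .nil, _ => []
  | .node l r, b => pdShape l b ++ (if b then ssize l + 1 else 0) :: pdShape r true

/-- `tAux k u` replaces each `0` entry of `u` by its (1-based, shifted by `k`) position. -/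
def tAux : ℕ → List ℕ → List ℕ
  | _, [] => []
  | k, v :: u => (if v = 0 then k + 1 else v) :: tAux (k+1) u

@[simp] lemma tAux_length : ∀ (k : ℕ) (u : List ℕ), (tAux k u).length = u.length := by
  intro k u
  induction u generalizing k with
  | nil => rfl
  | cons v u ih => simp [tAux, ih]

lemma tAux_append : ∀ (k : ℕ) (u v : List ℕ), tAux k (u ++ v) = tAux k u ++ tAux (k + u.length) v := by
  intro k u
  induction u generalizing k with
  | nil => simp [tAux]
  | cons a u ih =>
      intro v
      have h1 : tAux k ((a::u) ++ v) = (if a = 0 then k+1 else a) :: tAux (k+1) (u ++ v) := rfl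
      have h2 : tAux k (a::u) = (if a = 0 then k+1 else a) :: tAux (k+1) u := rfl
      rw [h1, ih, h2]
      have h3 : k + 1 + u.length = k + (a::u).length := by simp; omega
      rw [h3, cons_append]

lemma tAux_of_pos : ∀ (k : ℕ) (v : List ℕ), (∀ x ∈ v, 0 < x) → tAux k v = v := by
  intro k v
  induction v generalizing k with
  | nil => intro _; rfl
  | cons a v ih =>
      intro h
      have ha : a ≠ 0 := by have := h a (by simp); omega
      simp [tAux, ha, ih (k+1) (fun x hx => h x (by simp [hx]))]

lemma tAux_getElem (k : ℕ) (u : List ℕ) (j : ℕ) (h : j < u.length) :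
    (tAux k u)[j]'(by simpa using h) = if u[j] = 0 then k + j + 1 else u[j] := by
  induction u generalizing k j with
  | nil => simp at h
  | cons a u ih =>
      cases j with
      | zero => simp [tAux]
      | succ j =>
          simp only [tAux, getElem_cons_succ]
          rw [ih (k+1) j (by simpa using h)]
          have : k + 1 + j = k + (j+1) := by omega
          rw [this]

@[simp] lemma pdShape_length : ∀ (sh : Shape) (b : Bool), (pdShape sh b).length = ssize sh := by
  intro sh
  induction sh with
  | nil => intro b; rfl
  | node l r ihl ihr => intro b; simp [pdShape, ssize, ihl, ihr]; omega

lemma pdShape_true_pos : ∀ (sh : Shape), ∀ x ∈ pdShape sh true, 0 < x := by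
  intro sh
  induction sh with
  | nil => simp [pdShape]
  | node l r ihl ihr =>
      intro x hx
      simp only [pdShape, if_true, mem_append, mem_cons] at hx
      rcases hx with h | h | h
      · exact ihl x h
      · omega
      · exact ihr x h

lemma pdShape_true_le : ∀ (sh : Shape) (j : ℕ), (pdShape sh true).getD j 0 ≤ j + 1 := by
  intro sh
  induction sh with
  | nil => intro j; simp [pdShape, List.getD]
  | node l r ihl ihr =>
      intro j
      simp only [pdShape, if_true]
      rcases lt_or_ge j (pdShape l true).length with hj | hj
      · rw [List.getD_append _ _ _ _ hj]
        exact ihl j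
      · rw [List.getD_append_right _ _ _ _ hj]
        rcases Nat.eq_or_lt_of_le hj with he | hlt
        · have : j - (pdShape l true).length = 0 := by omega
          rw [this]
          simp only [List.getD_cons_zero, pdShape_length] at *
          omega
        · have : j - (pdShape l true).length = (j - (pdShape l true).length - 1) + 1 := by omega
          rw [this, List.getD_cons_succ]
          have := ihr (j - (pdShape l true).length - 1)
          omega

/-- Root marker: the entry at the root position. -/
lemma pdShape_root (l r : Shape) (b : Bool) :
    (pdShape (Shape.node l r) b).getD (ssize l) 0 = (if b then ssize l + 1 else 0) := by
  simp only [pdShape]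
  rw [List.getD_append_right _ _ _ _ (le_of_eq (pdShape_length l b))]
  rw [pdShape_length, Nat.sub_self]
  rfl

/-- No marker strictly after the root position. -/
lemma pdShape_after (l r : Shape) (b : Bool) (j : ℕ) (h1 : ssize l < j)
    (h2 : j < ssize (Shape.node l r)) :
    (pdShape (Shape.node l r) b).getD j 0 ≠ (if b then j + 1 else 0) := by
  simp only [pdShape]
  rw [List.getD_append_right _ _ _ _ (by simp; omega)]
  have hj : j - (pdShape l b).length = (j - ssize l - 1) + 1 := by simp; omega
  rw [hj, List.getD_cons_succ]
  have hlt : j - ssize l - 1 < (pdShape r true).length := by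
    simp only [pdShape_length, ssize] at h2 ⊢; omega
  cases b with
  | false =>
      simp only [Bool.false_eq_true, if_false]
      have : (pdShape r true).getD (j - ssize l - 1) 0 ∈ pdShape r true := by
        rw [List.getD_eq_getElem _ _ hlt]
        exact List.getElem_mem _
      have := pdShape_true_pos r _ this
      omega
  | true =>
      simp only [if_true]
      have := pdShape_true_le r (j - ssize l - 1)
      omega

lemma ssize_eq_zero {sh : Shape} (h : ssize sh = 0) : sh = Shape.nil := by
  cases sh with
  | nil => rfl
  | node l r => simp [ssize] at h

lemma pdShape_inj : ∀ (sh₁ : Shape) (b : Bool) (sh₂ : Shape),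
    pdShape sh₁ b = pdShape sh₂ b → sh₁ = sh₂ := by
  intro sh₁
  induction sh₁ with
  | nil =>
      intro b sh₂ h
      have : ssize sh₂ = 0 := by
        have := congrArg List.length h
        simpa [pdShape] using this.symm
      exact (ssize_eq_zero this).symm
  | node l₁ r₁ ihl ihr =>
      intro b sh₂ h
      cases sh₂ with
      | nil =>
          exfalso
          have := congrArg List.length h
          simp [pdShape, ssize] at this
      | node l₂ r₂ =>
          have hsz : ssize (Shape.node l₁ r₁) = ssize (Shape.node l₂ r₂) := by
            have := congrArg List.length h
            simpa [pdShape_length] using this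
          have hl : ssize l₁ = ssize l₂ := by
            by_contra hne
            rcases Nat.lt_or_ge (ssize l₁) (ssize l₂) with hlt | hge
            · -- marker at ssize l₂ in tree 2, but after root of tree 1
              have hm2 := pdShape_root l₂ r₂ b
              have hlt2 : ssize l₂ < ssize (Shape.node l₂ r₂) := by simp [ssize]
              have := pdShape_after l₁ r₁ b (ssize l₂) hlt (by omega)
              rw [h] at this
              exact this hm2
            · have hlt' : ssize l₂ < ssize l₁ := by omega
              have hm1 := pdShape_root l₁ r₁ b
              have := pdShape_after l₂ r₂ b (ssize l₁) hlt' (by rw [← hsz]; simp [ssize])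
              rw [← h] at this
              exact this hm1
          have hlen : (pdShape l₁ b).length = (pdShape l₂ b).length := by
            simp [pdShape_length, hl]
          simp only [pdShape] at h
          obtain ⟨hA, hB⟩ := List.append_inj h hlen
          rw [cons.injEq] at hB
          rw [ihl b l₂ hA, ihr true r₂ hB.2]

lemma pdShape_true_eq : ∀ sh : Shape, pdShape sh true = tAux 0 (pdShape sh false) := by
  intro sh
  induction sh with
  | nil => rfl
  | node l r ihl ihr =>
      simp only [pdShape, if_true, if_false]
      rw [tAux_append, tAux]
      simp only [pdShape_length, Nat.zero_add, if_pos rfl, Bool.false_eq_true, if_false]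
      rw [ihl, tAux_of_pos _ _ (pdShape_true_pos r)]
      simp

section PDlemmas
variable {α : Type*} [LinearOrder α] [Inhabited α]

lemma pdVal_def (S : List α) (i : ℕ) :
    pdVal S i =
      if h : ((Finset.Ico 1 i).filter
          (fun j => S.getD (j-1) default ≤ S.getD (i-1) default)).Nonempty
      then i - ((Finset.Ico 1 i).filter
          (fun j => S.getD (j-1) default ≤ S.getD (i-1) default)).max' h
      else 0 := rfl

@[simp] lemma PD_length (S : List α) : (PD S).length = S.length := by simp [PD]

lemma PD_getElem (S : List α) (j : ℕ) (h : j < S.length) :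
    (PD S)[j]'(by simpa using h) = pdVal S (j+1) := by
  simp [PD]

lemma getD_take (l : List α) (i x : ℕ) (d : α) (h : x < i) :
    (l.take i).getD x d = l.getD x d := by
  simp [List.getD_eq_getElem?_getD, List.getElem?_take, h]

lemma getD_drop (l : List α) (i x : ℕ) (d : α) :
    (l.drop i).getD x d = l.getD (i + x) d := by
  simp [List.getD_eq_getElem?_getD, List.getElem?_drop]

lemma pdVal_take (S : List α) (i k : ℕ) (hk : k ≤ i) :
    pdVal (S.take i) k = pdVal S k := by
  rcases Nat.eq_zero_or_pos k with rfl | hk1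
  · simp [pdVal_def]
  · have hset : (Finset.Ico 1 k).filter
        (fun j => (S.take i).getD (j-1) default ≤ (S.take i).getD (k-1) default) =
        (Finset.Ico 1 k).filter
        (fun j => S.getD (j-1) default ≤ S.getD (k-1) default) := by
      apply Finset.filter_congr
      intro j hj
      rw [Finset.mem_Ico] at hj
      rw [getD_take _ _ _ _ (by omega), getD_take _ _ _ _ (by omega)]
    rw [pdVal_def, pdVal_def, hset]


/-- The index set in the definition of `pdVal`. -/
def Jset (S : List α) (i : ℕ) : Finset ℕ :=
  (Finset.Ico 1 i).filter (fun j => S.getD (j-1) default ≤ S.getD (i-1) default)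

lemma pdVal_def' (S : List α) (i : ℕ) :
    pdVal S i = if h : (Jset S i).Nonempty then i - (Jset S i).max' h else 0 := rfl

lemma mem_Jset (S : List α) (i j : ℕ) :
    j ∈ Jset S i ↔ 1 ≤ j ∧ j < i ∧ S.getD (j-1) default ≤ S.getD (i-1) default := by
  simp [Jset, Finset.mem_filter, Finset.mem_Ico, and_assoc]

lemma pdVal_eq_of (S : List α) (i m : ℕ) (hm : m ∈ Jset S i)
    (hmax : ∀ j ∈ Jset S i, j ≤ m) : pdVal S i = i - m := by
  rw [pdVal_def', dif_pos ⟨m, hm⟩]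
  congr 1
  exact le_antisymm (Finset.max'_le _ _ _ hmax) (Finset.le_max' _ _ hm)

lemma pdVal_eq_zero (S : List α) (i : ℕ) (h : ∀ j, j ∉ Jset S i) : pdVal S i = 0 := by
  rw [pdVal_def', dif_neg]
  rintro ⟨j, hj⟩
  exact h j hj

lemma pdVal_drop (S : List α) (i t : ℕ)
    (hmin : ∀ j, j < S.length → S.getD i default ≤ S.getD j default)
    (hstrict : ∀ j, j < i → S.getD i default < S.getD j default)
    (ht : 1 ≤ t) (hts : i + t ≤ S.length) :
    pdVal S (i + t) = pdVal (S.drop i) t := by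
  rcases eq_or_lt_of_le ht with h1 | h2
  · -- t = 1
    obtain rfl : t = 1 := h1.symm
    rw [pdVal_eq_zero S (i+1), pdVal_eq_zero (S.drop i) 1]
    · intro j hj
      rw [mem_Jset] at hj
      omega
    · intro j hj
      rw [mem_Jset] at hj
      obtain ⟨hj1, hj2, hj3⟩ := hj
      have h3 : j - 1 < i := by omega
      have h4 := hstrict (j-1) h3
      rw [show i + 1 - 1 = i from rfl] at hj3
      exact absurd hj3 (not_le.mpr h4)
  · -- t ≥ 2
    have hne' : (Jset (S.drop i) t).Nonempty := by
      refine ⟨1, ?_⟩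
      rw [mem_Jset]
      refine ⟨le_refl 1, by omega, ?_⟩
      rw [getD_drop, getD_drop]
      rw [show (1:ℕ) - 1 = 0 from rfl, show i + (t-1) = i + t - 1 by omega, Nat.add_zero]
      exact hmin (i + t - 1) (by omega)
    set m' := (Jset (S.drop i) t).max' hne' with hm'
    have hm'mem := Finset.max'_mem _ hne'
    rw [← hm', mem_Jset] at hm'mem
    obtain ⟨hm1, hm2, hm3⟩ := hm'mem
    rw [getD_drop, getD_drop, show i + (m' - 1) = m' + i - 1 by omega,
      show i + (t-1) = i + t - 1 by omega] at hm3
    have hL : pdVal (S.drop i) t = t - m' :=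
      pdVal_eq_of _ _ _ (Finset.max'_mem _ hne') (fun j hj => Finset.le_max' _ _ hj)
    have hR : pdVal S (i + t) = (i + t) - (m' + i) := by
      apply pdVal_eq_of
      · rw [mem_Jset]
        exact ⟨by omega, by omega, hm3⟩
      · intro j hj
        rw [mem_Jset] at hj
        obtain ⟨hj1, hj2, hj3⟩ := hj
        rcases Nat.lt_or_ge i j with hij | hij
        · have : j - i ∈ Jset (S.drop i) t := by
            rw [mem_Jset]
            refine ⟨by omega, by omega, ?_⟩
            rw [getD_drop, getD_drop, show i + (j - i - 1) = j - 1 by omega,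
              show i + (t-1) = i + t - 1 by omega]
            exact hj3
          have := Finset.le_max' _ _ this
          omega
        · omega
    rw [hL, hR]
    omega

lemma PD_cons (c : α) (S : List α) (hc : ∀ x ∈ S, c ≤ x) :
    PD (c :: S) = 0 :: tAux 0 (PD S) := by
  apply List.ext_getElem
  · simp
  · intro k h1 h2
    simp only [PD_length, length_cons] at h1
    cases k with
    | zero =>
        rw [PD_getElem _ _ (by simp)]
        rw [show ((0 : ℕ) :: tAux 0 (PD S))[0] = 0 from rfl]
        apply pdVal_eq_zero
        intro j hj
        rw [mem_Jset] at hj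
        omega
    | succ k =>
        have hk : k < S.length := by omega
        rw [PD_getElem _ _ (by simpa using h1)]
        rw [show ((0:ℕ) :: tAux 0 (PD S))[k+1]'h2 = (tAux 0 (PD S))[k]'(by simp [hk]) from
          List.getElem_cons_succ ..]
        rw [tAux_getElem 0 (PD S) k (by simp [hk])]
        rw [PD_getElem _ _ hk]
        have hcond : (c :: S).getD (k + 1 + 1 - 1) default = S.getD k default := by
          rw [show k + 1 + 1 - 1 = k + 1 from rfl, List.getD_cons_succ]
        have h1J : 1 ∈ Jset (c :: S) (k+2) := by
          rw [mem_Jset]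
          refine ⟨le_refl 1, by omega, ?_⟩
          rw [show (1:ℕ) - 1 = 0 from rfl, List.getD_cons_zero, hcond]
          rw [List.getD_eq_getElem _ _ hk]
          exact hc _ (List.getElem_mem _)
        have htrans : ∀ j, 2 ≤ j → (j ∈ Jset (c :: S) (k+2) ↔ (j - 1 ∈ Jset S (k+1) ∧ j < k + 2)) := by
          intro j hj2
          rw [mem_Jset, mem_Jset]
          have hgd : (c :: S).getD (j-1) default = S.getD (j-1-1) default := by
            rw [show j - 1 = (j - 2) + 1 by omega, List.getD_cons_succ]
            congr 1
          rw [hgd, hcond, show k + 1 - 1 = k from rfl]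
          constructor
          · rintro ⟨ha, hb, hc'⟩; exact ⟨⟨by omega, by omega, hc'⟩, hb⟩
          · rintro ⟨⟨ha, hb, hc'⟩, hd⟩; exact ⟨by omega, hd, hc'⟩
        by_cases hJ'' : (Jset S (k+1)).Nonempty
        · set m'' := (Jset S (k+1)).max' hJ'' with hm''
          have hmem := Finset.max'_mem _ hJ''
          rw [← hm'', mem_Jset] at hmem
          have hS : pdVal S (k+1) = (k+1) - m'' :=
            pdVal_eq_of _ _ _ (Finset.max'_mem _ hJ'') (fun j hj => Finset.le_max' _ _ hj)
          have hCS : pdVal (c :: S) (k+2) = (k+2) - (m'' + 1) := by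
            apply pdVal_eq_of
            · rw [htrans _ (by omega)]
              refine ⟨?_, by omega⟩
              rw [show m'' + 1 - 1 = m'' from rfl]
              exact Finset.max'_mem _ hJ''
            · intro j hj
              rcases Nat.lt_or_ge j 2 with hj2 | hj2
              · omega
              · rw [htrans _ hj2] at hj
                have := Finset.le_max' _ _ hj.1
                omega
          rw [hCS, hS]
          rw [if_neg (by omega)]
          omega
        · have hS : pdVal S (k+1) = 0 := by
            rw [pdVal_def', dif_neg hJ'']
          have hCS : pdVal (c :: S) (k+2) = (k+2) - 1 := by
            apply pdVal_eq_of _ _ _ h1J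
            intro j hj
            rcases Nat.lt_or_ge j 2 with hj2 | hj2
            · omega
            · rw [htrans _ hj2] at hj
              exact absurd ⟨j - 1, hj.1⟩ hJ''
          rw [hCS, hS, if_pos rfl]
          omega

lemma PD_append_min (S : List α) (i : ℕ) (hi : i < S.length)
    (hmin : ∀ j, j < S.length → S.getD i default ≤ S.getD j default)
    (hstrict : ∀ j, j < i → S.getD i default < S.getD j default) :
    PD S = PD (S.take i) ++ PD (S.drop i) := by
  apply List.ext_getElem
  · simp; omega
  · intro k h1 h2
    simp only [PD_length] at h1
    rw [PD_getElem _ _ h1]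
    rcases Nat.lt_or_ge k i with hk | hk
    · rw [List.getElem_append_left (by simp; omega)]
      rw [PD_getElem _ _ (by simp; omega)]
      exact (pdVal_take S i (k+1) (by omega)).symm
    · have hlen : (PD (S.take i)).length = i := by simp; omega
      rw [List.getElem_append_right (by rw [hlen]; omega)]
      simp only [hlen]
      rw [PD_getElem _ _ (by simp; omega)]
      rw [show k + 1 = i + (k - i + 1) by omega]
      exact pdVal_drop S i (k - i + 1) hmin hstrict (by omega) (by omega)

lemma PD_split (S : List α) (i : ℕ) (hi : i < S.length)
    (hmin : ∀ j, j < S.length → S.getD i default ≤ S.getD j default)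
    (hstrict : ∀ j, j < i → S.getD i default < S.getD j default) :
    PD S = PD (S.take i) ++ 0 :: tAux 0 (PD (S.drop (i+1))) := by
  rw [PD_append_min S i hi hmin hstrict]
  congr 1
  have hdrop : S.drop i = S.getD i default :: S.drop (i+1) := by
    rw [List.drop_eq_getElem_cons hi, List.getD_eq_getElem _ _ hi]
  rw [hdrop]
  apply PD_cons
  intro x hx
  obtain ⟨j, hj, rfl⟩ := List.getElem_of_mem hx
  rw [List.getElem_drop]
  rw [← List.getD_eq_getElem _ default]
  apply hmin
  simp at hj
  omega


lemma lmi_spec (S : List α) (hne : S ≠ []) :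
    leftmostMinIdx S < S.length ∧
    (∀ j, j < S.length → S.getD (leftmostMinIdx S) default ≤ S.getD j default) ∧
    (∀ j, j < leftmostMinIdx S → S.getD (leftmostMinIdx S) default < S.getD j default) := by
  have hr : (List.range S.length) ≠ [] := by
    simp [List.length_eq_zero_iff.not.symm]
    exact fun h => hne (List.length_eq_zero_iff.mp h)
  obtain ⟨m, hm⟩ : ∃ m, (List.range S.length).argmin (fun j => S.getD j default) = some m := by
    cases h : (List.range S.length).argmin (fun j => S.getD j default) with
    | none => exact absurd (List.argmin_eq_none.mp h) hr
    | some m => exact ⟨m, rfl⟩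
  have hmm : m ∈ (List.range S.length).argmin (fun j => S.getD j default) := hm
  have hlmi : leftmostMinIdx S = m := by rw [leftmostMinIdx, hm]; rfl
  have hmem : m < S.length := by
    have := List.argmin_mem hmm
    simpa using this
  refine ⟨by rw [hlmi]; exact hmem, ?_, ?_⟩
  · intro j hj
    rw [hlmi]
    exact List.le_of_mem_argmin (List.mem_range.mpr hj) hmm
  · intro j hj
    rw [hlmi] at hj ⊢
    by_contra hle
    push_neg at hle
    have hjmem : j ∈ List.range S.length := List.mem_range.mpr (by omega)
    have hidx := List.index_of_argmin hmm hjmem hle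
    have hir : ∀ x, x < S.length → (List.range S.length).idxOf x = x := by
      intro x hx
      have h1 : (List.range S.length)[x]'(by simpa using hx) = x := by simp
      conv_lhs => rw [← h1]
      exact List.Nodup.idxOf_getElem (List.nodup_range ..) x (by simpa using hx)
    rw [hir m hmem, hir j (by omega)] at hidx
    omega

lemma CTaux_congr : ∀ (n : ℕ) (S : List α), S.length ≤ n → CTaux n S = CTaux S.length S := by
  intro n
  induction n using Nat.strong_induction_on with
  | _ n ih =>
    intro S hS
    match n with
    | 0 =>
        have : S.length = 0 := by omega
        rw [this]
    | Nat.succ k =>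
        rcases eq_or_ne S [] with rfl | hne
        · simp [CTaux]
        · obtain ⟨m, hm⟩ : ∃ m, S.length = m + 1 := by
            rcases Nat.exists_eq_succ_of_ne_zero (fun h => hne (List.length_eq_zero_iff.mp h)) with ⟨m, hm⟩
            exact ⟨m, hm⟩
          have hiE : S.isEmpty = false := by simpa using hne
          have hi := (lmi_spec S hne).1
          rw [hm]
          show (if S.isEmpty then BTree.nil else _) = (if S.isEmpty then BTree.nil else _)
          rw [hiE]
          simp only [if_false, Bool.false_eq_true]
          have hpre : (S.take (leftmostMinIdx S)).length ≤ m := by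
            simp; omega
          have hsuf : (S.drop (leftmostMinIdx S + 1)).length ≤ m := by
            simp; omega
          rw [ih k (by omega) _ (by omega), ih m (by omega) _ hpre,
            ih k (by omega) _ (by omega), ih m (by omega) _ hsuf]

lemma CT_node (S : List α) (hne : S ≠ []) :
    CT S = BTree.node (CT (S.take (leftmostMinIdx S))) (S.getD (leftmostMinIdx S) default)
      (CT (S.drop (leftmostMinIdx S + 1))) := by
  obtain ⟨m, hm⟩ : ∃ m, S.length = m + 1 := by
    rcases Nat.exists_eq_succ_of_ne_zero (fun h => hne (List.length_eq_zero_iff.mp h)) with ⟨m, hm⟩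
    exact ⟨m, hm⟩
  have hiE : S.isEmpty = false := by simpa using hne
  have hi := (lmi_spec S hne).1
  rw [CT, hm]
  show (if S.isEmpty then BTree.nil else _) = _
  rw [hiE]
  simp only [if_false, Bool.false_eq_true]
  rw [CT, CT, CTaux_congr m _ (by simp; omega), CTaux_congr m _ (by simp; omega)]

lemma main : ∀ (n : ℕ) (S : List α), S.length = n → pdShape (CT S).shape false = PD S := by
  intro n
  induction n using Nat.strong_induction_on with
  | _ n ih =>
    intro S hS
    rcases eq_or_ne S [] with rfl | hne
    · rfl
    · have hspec := lmi_spec S hne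
      obtain ⟨hi, hmin, hstrict⟩ := hspec
      set i := leftmostMinIdx S with hidef
      rw [CT_node S hne]
      show pdShape (Shape.node (CT (S.take i)).shape (CT (S.drop (i+1))).shape) false = PD S
      rw [pdShape]
      have hIH1 : pdShape (CT (S.take i)).shape false = PD (S.take i) :=
        ih (S.take i).length (by simp; omega) _ rfl
      have hIH2 : pdShape (CT (S.drop (i+1))).shape false = PD (S.drop (i+1)) :=
        ih (S.drop (i+1)).length (by simp; omega) _ rfl
      rw [pdShape_true_eq, hIH1, hIH2]
      simp only [Bool.false_eq_true, if_false]
      exact (PD_split S i hi hmin hstrict).symm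

end PDlemmas

end CTPD

/-- Two equal-length strings have equal Cartesian trees iff their
parent-distance encodings coincide. -/
theorem stmt2 {α β : Type*} [LinearOrder α] [Inhabited α] [LinearOrder β] [Inhabited β]
    (S₁ : List α) (S₂ : List β) (hlen : S₁.length = S₂.length) :
    (CT S₁).shape = (CT S₂).shape ↔ PD S₁ = PD S₂ := by
  clear hlen
  constructor
  · intro h
    rw [← CTPD.main S₁.length S₁ rfl, ← CTPD.main S₂.length S₂ rfl, h]
  · intro h
    apply CTPD.pdShape_inj _ false
    rw [CTPD.main S₁.length S₁ rfl, CTPD.main S₂.length S₂ rfl, h]
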